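/- Let η₁, …, η_N be i.i.d. nonnegative random variables with CDF F(x) = c₀ x^τ + o(x^τ) as x → 0⁺, where τ > 0, c₀ > 0. For S ≤ N, let η_(1) ≤ ⋯ ≤ η_(S) be the S smallest order statistics. If N = N(ρ) is a function of ρ > 0 with N(ρ)/ρ^τ → ∞ as ρ → ∞, then for any ε > 0, Pr{ Σ_{j=1}^S η_(j) ≤ ε/ρ } → 1 as ρ → ∞. -/

import Mathlib

open MeasureTheory ProbabilityTheory Filter

lemma chebyshev_count
    {Ω : Type*} [MeasureSpace Ω] [IsProbabilityMeasure (ℙ : Measure Ω)]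
    (η : ℕ → Ω → ℝ) (hη : ∀ i, Measurable (η i))
    (hindep : iIndepFun η ℙ)
    (μ₀ : Measure ℝ) (hdist : ∀ i, Measure.map (η i) ℙ = μ₀)
    (n S : ℕ) (δ : ℝ)
    (hm : (S : ℝ) < n * (μ₀ (Set.Iic δ)).toReal) :
    ℙ {ω | (((Finset.range n).filter (fun i => η i ω ≤ δ)).card : ℝ) < S}
      ≤ ENNReal.ofReal ((n * (μ₀ (Set.Iic δ)).toReal) /
          ((n * (μ₀ (Set.Iic δ)).toReal) - S) ^ 2) := by
  classical
  set p := (μ₀ (Set.Iic δ)).toReal with hp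
  set g : ℝ → ℝ := fun x => if x ≤ δ then 1 else 0 with hgdef
  have hgm : Measurable g := Measurable.ite measurableSet_Iic measurable_const measurable_const
  set ind : ℕ → Ω → ℝ := fun i => g ∘ η i with hinddef
  have hindm : ∀ i, Measurable (ind i) := fun i => hgm.comp (hη i)
  have hind01 : ∀ i ω, ind i ω = 0 ∨ ind i ω = 1 := by
    intro i ω; by_cases h : η i ω ≤ δ <;> simp [ind, g, h, Function.comp]
  have hmemlp : ∀ i, MemLp (ind i) 2 ℙ := by
    intro i
    refine MemLp.of_bound (hindm i).aestronglyMeasurable 1 (Eventually.of_forall fun ω => ?_)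
    rcases hind01 i ω with h | h <;> simp [h]
  have hindicator : ∀ i, ind i = Set.indicator (η i ⁻¹' Set.Iic δ) (fun _ => (1:ℝ)) := by
    intro i; ext ω
    by_cases h : η i ω ≤ δ <;> simp [ind, g, h, Set.indicator_apply, Set.mem_Iic, Function.comp]
  have hEind : ∀ i, ∫ ω, ind i ω = p := by
    intro i
    rw [hindicator i, integral_indicator_const (1:ℝ) ((hη i) measurableSet_Iic)]
    rw [hp, ← hdist i, Measure.map_apply (hη i) measurableSet_Iic]
    simp [Measure.real]
  set X : Ω → ℝ := fun ω => ∑ i ∈ Finset.range n, ind i ω with hXdef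
  have hXsum : X = ∑ i ∈ Finset.range n, ind i := by
    ext ω; simp [X, Finset.sum_apply]
  have hXmem : MemLp X 2 ℙ := by
    rw [hXsum]; exact memLp_finset_sum' _ (fun i _ => hmemlp i)
  have hEX : ∫ ω, X ω = n * p := by
    rw [hXdef]
    rw [integral_finset_sum _ (fun i _ => (hmemlp i).integrable one_le_two)]
    simp [hEind, Finset.sum_const, mul_comm]
  have hvar : variance X ℙ ≤ n * p := by
    rw [hXsum, IndepFun.variance_sum (fun i _ => hmemlp i)
      (fun i _ j _ hij => (hindep.comp _ (fun _ => hgm)).indepFun hij)]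
    calc ∑ i ∈ Finset.range n, variance (ind i) ℙ
        ≤ ∑ i ∈ Finset.range n, p := by
          refine Finset.sum_le_sum fun i _ => ?_
          have h1 : variance (ind i) ℙ ≤ ∫ ω, ((ind i) ^ 2) ω :=
            variance_le_expectation_sq (hindm i).aestronglyMeasurable
          have h2 : (ind i) ^ 2 = ind i := by
            ext ω; rcases hind01 i ω with h | h <;> simp [h]
          rw [h2, hEind i] at h1; exact h1
      _ = n * p := by simp [mul_comm]
  have hc : 0 < (n : ℝ) * p - S := by linarith
  have hcheb := meas_ge_le_variance_div_sq (μ := ℙ) hXmem hc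
  have hsub : {ω : Ω | (((Finset.range n).filter (fun i => η i ω ≤ δ)).card : ℝ) < S}
      ⊆ {ω : Ω | (n : ℝ) * p - S ≤ |X ω - ∫ ω, X ω|} := by
    intro ω hω
    simp only [Set.mem_setOf_eq] at hω ⊢
    have hXcard : X ω = (((Finset.range n).filter (fun i => η i ω ≤ δ)).card : ℝ) := by
      rw [hXdef]
      simp only [ind, g, Function.comp_apply]
      rw [Finset.sum_boole]
    have habs := neg_le_abs (X ω - ∫ ω, X ω)
    rw [hEX]
    rw [hEX] at habs
    rw [hXcard] at habs ⊢
    linarith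
  calc ℙ {ω | (((Finset.range n).filter (fun i => η i ω ≤ δ)).card : ℝ) < S}
      ≤ ℙ {ω : Ω | (n : ℝ) * p - S ≤ |X ω - ∫ ω, X ω|} := measure_mono hsub
    _ ≤ ENNReal.ofReal (variance X ℙ / ((n : ℝ) * p - S) ^ 2) := hcheb
    _ ≤ ENNReal.ofReal ((n * p) / ((n : ℝ) * p - S) ^ 2) := by
        apply ENNReal.ofReal_le_ofReal
        gcongr

/-- Key user-scaling lemma.  Let `η i` be i.i.d. nonnegative random variables with common
CDF `F(x) = c₀ x^τ + o(x^τ)` as `x → 0⁺` (encoded as `F(x)/x^τ → c₀`), `c₀, τ > 0`.  For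
`S ≤ N(ρ)` users, let the sum of the `S` smallest order statistics among the first `N(ρ)`
samples be `inf { Σ_{i∈T} η i : T ⊆ range N(ρ), |T| = S }`.  If `N(ρ)/ρ^τ → ∞`, then for
every `ε > 0` the probability that this sum is at most `ε/ρ` tends to `1` as `ρ → ∞`. -/
theorem sum_smallest_order_statistics_tendsto_one
    {Ω : Type*} [MeasureSpace Ω] [IsProbabilityMeasure (ℙ : Measure Ω)]
    (η : ℕ → Ω → ℝ) (hη : ∀ i, Measurable (η i)) (hηpos : ∀ i ω, 0 ≤ η i ω)
    (hindep : iIndepFun η ℙ)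
    (μ₀ : Measure ℝ) (hdist : ∀ i, Measure.map (η i) ℙ = μ₀)
    (c₀ τ : ℝ) (hc₀ : 0 < c₀) (hτ : 0 < τ)
    (F : ℝ → ℝ) (hF : ∀ x, F x = (μ₀ (Set.Iic x)).toReal)
    (hCDF : Tendsto (fun x => F x / x ^ τ) (nhdsWithin 0 (Set.Ioi 0)) (nhds c₀))
    (S : ℕ) (hS : 0 < S) (N : ℝ → ℕ) (hSN : ∀ ρ, S ≤ N ρ)
    (hN : Tendsto (fun ρ => (N ρ : ℝ) / ρ ^ τ) atTop atTop) :
    ∀ ε : ℝ, 0 < ε →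
      Tendsto
        (fun ρ => ℙ {ω |
          sInf ((fun T : Finset ℕ => ∑ i ∈ T, η i ω) ''
              {T | T ⊆ Finset.range (N ρ) ∧ T.card = S}) ≤ ε / ρ})
        atTop (nhds 1) := by
  classical
  intro ε hε
  have hS' : (0:ℝ) < S := by exact_mod_cast hS
  -- the threshold
  have hδ0 : Tendsto (fun ρ => ε / (S * ρ)) atTop (nhdsWithin 0 (Set.Ioi 0)) := by
    rw [tendsto_nhdsWithin_iff]
    constructor
    · exact Tendsto.div_atTop tendsto_const_nhds (tendsto_id.const_mul_atTop hS')
    · filter_upwards [eventually_gt_atTop (0:ℝ)] with ρ hρ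
      exact Set.mem_Ioi.2 (by positivity)
  have hratio : Tendsto (fun ρ => F (ε / (S * ρ)) / (ε / (S * ρ)) ^ τ) atTop (nhds c₀) :=
    hCDF.comp hδ0
  -- mean number of small samples tends to infinity
  have hmt : Tendsto (fun ρ => (N ρ : ℝ) * (μ₀ (Set.Iic (ε / (S * ρ)))).toReal) atTop atTop := by
    have key : Tendsto
        (fun ρ => ((N ρ : ℝ) / ρ ^ τ) * ((F (ε / (S * ρ)) / (ε / (S * ρ)) ^ τ) * (ε / S) ^ τ))
        atTop atTop := by
      have hC : 0 < c₀ * (ε / S) ^ τ := by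
        have : (0:ℝ) < (ε / S) ^ τ := Real.rpow_pos_of_pos (by positivity) _
        positivity
      exact Tendsto.atTop_mul_pos hC hN (hratio.mul_const _)
    apply key.congr'
    filter_upwards [eventually_gt_atTop (0:ℝ)] with ρ hρ
    have hδρ : 0 < ε / (S * ρ) := by positivity
    have h1 : (ε / (S * ρ)) * ρ = ε / S := by field_simp
    have h2 : (ε / (S * ρ)) ^ τ * ρ ^ τ = (ε / S) ^ τ := by
      rw [← Real.mul_rpow hδρ.le hρ.le, h1]
    have hδτ : 0 < (ε / (S * ρ)) ^ τ := Real.rpow_pos_of_pos hδρ _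
    have hρτ : 0 < ρ ^ τ := Real.rpow_pos_of_pos hρ _
    rw [← hF, ← h2]
    field_simp
  -- measurability of the "bad" event
  have hmeasbad : ∀ ρ : ℝ, MeasurableSet
      {ω : Ω | (((Finset.range (N ρ)).filter (fun i => η i ω ≤ ε / (S * ρ))).card : ℝ) < S} := by
    intro ρ
    have hmf : Measurable fun ω =>
        (((Finset.range (N ρ)).filter (fun i => η i ω ≤ ε / (S * ρ))).card : ℝ) := by
      have heq : (fun ω => (((Finset.range (N ρ)).filter
            (fun i => η i ω ≤ ε / (S * ρ))).card : ℝ))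
          = fun ω => ∑ i ∈ Finset.range (N ρ), if η i ω ≤ ε / (S * ρ) then (1:ℝ) else 0 := by
        funext ω; rw [Finset.sum_boole]
      rw [heq]
      exact Finset.measurable_sum _ fun i _ =>
        Measurable.ite ((hη i) measurableSet_Iic) measurable_const measurable_const
    exact measurableSet_lt hmf measurable_const
  -- the bad event vanishes
  have hbad : Tendsto (fun ρ => ℙ
      {ω : Ω | (((Finset.range (N ρ)).filter (fun i => η i ω ≤ ε / (S * ρ))).card : ℝ) < S})
      atTop (nhds 0) := by
    have h4 : Tendsto
        (fun ρ => ENNReal.ofReal (4 / ((N ρ : ℝ) * (μ₀ (Set.Iic (ε / (S * ρ)))).toReal)))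
        atTop (nhds 0) := by
      rw [← ENNReal.ofReal_zero]
      exact ENNReal.tendsto_ofReal (Tendsto.div_atTop tendsto_const_nhds hmt)
    apply tendsto_of_tendsto_of_tendsto_of_le_of_le' tendsto_const_nhds h4
    · exact Eventually.of_forall fun ρ => zero_le
    · filter_upwards [hmt.eventually_ge_atTop (2 * S)] with ρ hρ2S
      set mρ := (N ρ : ℝ) * (μ₀ (Set.Iic (ε / (S * ρ)))).toReal with hmρ
      have hmS : (S : ℝ) < mρ := by linarith
      have hch := chebyshev_count η hη hindep μ₀ hdist (N ρ) S (ε / (S * ρ)) hmS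
      refine hch.trans (ENNReal.ofReal_le_ofReal ?_)
      have hm0 : 0 < mρ := by linarith
      have h1 : mρ / 2 ≤ mρ - S := by linarith
      have hhalf : 0 < mρ / 2 := by positivity
      calc mρ / (mρ - S) ^ 2 ≤ mρ / (mρ / 2) ^ 2 := by
            gcongr
        _ = 4 / mρ := by field_simp; ring
  -- conclude by squeezing
  have hlow : Tendsto (fun ρ => 1 - ℙ
      {ω : Ω | (((Finset.range (N ρ)).filter (fun i => η i ω ≤ ε / (S * ρ))).card : ℝ) < S})
      atTop (nhds 1) := by
    have := ENNReal.Tendsto.sub (tendsto_const_nhds (x := (1 : ENNReal))) hbad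
      (Or.inl ENNReal.one_ne_top)
    simpa using this
  apply tendsto_of_tendsto_of_tendsto_of_le_of_le' hlow tendsto_const_nhds
  · filter_upwards [eventually_gt_atTop (0:ℝ)] with ρ hρ
    rw [← prob_compl_eq_one_sub (hmeasbad ρ)]
    apply measure_mono
    intro ω hω
    simp only [Set.mem_compl_iff, Set.mem_setOf_eq, not_lt] at hω
    have hcard : S ≤ ((Finset.range (N ρ)).filter (fun i => η i ω ≤ ε / (S * ρ))).card := by
      exact_mod_cast hω
    obtain ⟨T, hT, hTcard⟩ := Finset.exists_subset_card_eq hcard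
    have hTsub : T ⊆ Finset.range (N ρ) := hT.trans (Finset.filter_subset _ _)
    have hmem : (∑ i ∈ T, η i ω) ∈
        ((fun T : Finset ℕ => ∑ i ∈ T, η i ω) ''
          {T | T ⊆ Finset.range (N ρ) ∧ T.card = S}) :=
      ⟨T, ⟨hTsub, hTcard⟩, rfl⟩
    have hbdd : BddBelow ((fun T : Finset ℕ => ∑ i ∈ T, η i ω) ''
        {T | T ⊆ Finset.range (N ρ) ∧ T.card = S}) := by
      refine ⟨0, ?_⟩
      rintro x ⟨T', _, rfl⟩
      exact Finset.sum_nonneg fun i _ => hηpos i ω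
    have hsumle : (∑ i ∈ T, η i ω) ≤ ε / ρ := by
      have : (∑ i ∈ T, η i ω) ≤ T.card • (ε / (S * ρ)) :=
        Finset.sum_le_card_nsmul T _ _ fun i hi => (Finset.mem_filter.1 (hT hi)).2
      rw [hTcard, nsmul_eq_mul] at this
      have heq : (S : ℝ) * (ε / (S * ρ)) = ε / ρ := by field_simp
      linarith [heq ▸ this]
    exact Set.mem_setOf_eq ▸ le_trans (csInf_le hbdd hmem) hsumle
  · exact Eventually.of_forall fun ρ => prob_le_one
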